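/- Let p be a prime, m, n ≥ 1. The number of pairs of weakly increasing tuples 0 ≤ a₁ ≤ ⋯ ≤ a_m < p and 0 ≤ b₁ ≤ ⋯ ≤ b_n < p such that a_i + b_j is not divisible by p for all i, j, equals ∑_{l=1}^{min(n, p-1)} C(p, l) · C(n-1, n-l) · C(m + p - l - 1, m). -/

import Mathlib

set_option linter.unusedSectionVars false

open Finset
open scoped Classical

variable {α : Type*} [LinearOrder α]

/-- The multiset of values of a tuple. -/
def toSym {k : ℕ} (f : Fin k → α) : Sym α k :=
  ⟨(List.ofFn f : Multiset α), by simp⟩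

lemma mem_toSym {k : ℕ} {f : Fin k → α} {x : α} : x ∈ toSym f ↔ ∃ i, f i = x := by
  simp [toSym, Sym.mem_mk, List.mem_ofFn, Set.mem_range]

/-- The sorted tuple of a multiset. -/
noncomputable def ofSym {k : ℕ} (s : Sym α k) : Fin k → α := fun i =>
  (Multiset.sort s.1 (· ≤ ·)).get
    ⟨i.1, by simp only [Multiset.length_sort, s.2]; exact i.2⟩

lemma monotone_ofSym {k : ℕ} (s : Sym α k) : Monotone (ofSym s) := by
  intro i j hij
  exact (Multiset.pairwise_sort s.1 (· ≤ ·)).rel_get_of_le (by exact hij)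

lemma toSym_ofSym {k : ℕ} (s : Sym α k) : toSym (ofSym s) = s := by
  apply Subtype.ext
  have h1 : List.ofFn (ofSym s) = Multiset.sort s.1 (· ≤ ·) := by
    apply List.ext_get
    · simp [s.2]
    · intro i h1 h2
      simp [ofSym]
  show ((List.ofFn (ofSym s) : Multiset α)) = s.1
  rw [h1, Multiset.sort_eq]

lemma ofSym_toSym {k : ℕ} {f : Fin k → α} (hf : Monotone f) : ofSym (toSym f) = f := by
  have hperm : List.Perm (Multiset.sort (toSym f).1 (· ≤ ·)) (List.ofFn f) := by
    rw [← Multiset.coe_eq_coe, Multiset.sort_eq]; rfl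
  have heq : (Multiset.sort (toSym f).1 (· ≤ ·)) = List.ofFn f :=
    List.Perm.eq_of_pairwise' (Multiset.pairwise_sort _ _) hf.sortedLE_ofFn.pairwise hperm
  funext i
  simp only [ofSym, List.get_eq_getElem]
  rw [List.getElem_of_eq heq]
  simp


variable {q : ℕ}

lemma card_filter_mono_pair {k k' : ℕ} (R : Sym (Fin q) k → Sym (Fin q) k' → Prop) :
    (univ.filter fun fg : (Fin k → Fin q) × (Fin k' → Fin q) =>
        Monotone fg.1 ∧ Monotone fg.2 ∧ R (toSym fg.1) (toSym fg.2)).card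
      = (univ.filter fun AB : Sym (Fin q) k × Sym (Fin q) k' => R AB.1 AB.2).card := by
  apply Finset.card_bij' (fun fg _ => (toSym fg.1, toSym fg.2))
    (fun AB _ => (ofSym AB.1, ofSym AB.2))
  · intro fg hfg
    simp only [mem_filter, mem_univ, true_and] at hfg
    refine Prod.ext ?_ ?_
    · exact ofSym_toSym hfg.1
    · exact ofSym_toSym hfg.2.1
  · intro AB hAB
    refine Prod.ext ?_ ?_ <;> simp [toSym_ofSym]
  · intro fg hfg
    simp only [mem_filter, mem_univ, true_and] at hfg ⊢
    exact hfg.2.2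
  · intro AB hAB
    simp only [mem_filter, mem_univ, true_and] at hAB ⊢
    exact ⟨monotone_ofSym _, monotone_ofSym _, by
      rw [toSym_ofSym, toSym_ofSym]; exact hAB⟩

lemma card_sym_filter_subset (k : ℕ) (S : Finset (Fin q)) :
    (univ.filter fun A : Sym (Fin q) k => ∀ x ∈ A, x ∈ S).card = (S.card + k - 1).choose k := by
  have hcard : (univ : Finset (Sym {x // x ∈ S} k)).card = (S.card + k - 1).choose k := by
    rw [Finset.card_univ, Sym.card_sym_eq_choose, Fintype.card_coe]
  rw [← hcard]
  refine (Finset.card_bij (fun (B : Sym {x // x ∈ S} k) _ => B.map Subtype.val) ?_ ?_ ?_).symm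
  · intro B _
    simp only [mem_filter, mem_univ, true_and]
    intro x hx
    obtain ⟨y, _, rfl⟩ := Sym.mem_map.mp hx
    exact y.2
  · intro B _ B' _ h
    exact Sym.map_injective Subtype.val_injective _ h
  · intro A hA
    simp only [mem_filter, mem_univ, true_and] at hA
    refine ⟨⟨A.1.attach.map (fun x => (⟨x.1, hA x.1 x.2⟩ : {x // x ∈ S})), by simp [A.2]⟩,
      mem_univ _, ?_⟩
    apply Subtype.ext
    show Multiset.map Subtype.val (Multiset.map _ A.1.attach) = A.1
    rw [Multiset.map_map]
    exact Multiset.attach_map_val A.1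

lemma card_sym_filter_toFinset_eq {n : ℕ} (hn : 1 ≤ n) (S : Finset (Fin q)) :
    (univ.filter fun B : Sym (Fin q) n => B.1.toFinset = S).card
      = if 1 ≤ S.card ∧ S.card ≤ n then (n - 1).choose (n - S.card) else 0 := by
  split_ifs with h
  · obtain ⟨h1, h2⟩ := h
    have key := card_sym_filter_subset (q := q) (n - S.card) S
    have hb : (univ.filter fun C : Sym (Fin q) (n - S.card) => ∀ x ∈ C, x ∈ S).card
        = (univ.filter fun B : Sym (Fin q) n => B.1.toFinset = S).card := by
      refine Finset.card_bij
        (fun C _ => (⟨S.1 + C.1, by simp [C.2]; omega⟩ : Sym (Fin q) n)) ?_ ?_ ?_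
      · intro C hC
        simp only [mem_filter, mem_univ, true_and] at hC
        refine mem_filter.mpr ⟨mem_univ _, ?_⟩
        show (S.1 + C.1).toFinset = S
        rw [Multiset.toFinset_add, Finset.val_toFinset]
        rw [Finset.union_eq_left]
        intro x hx
        exact hC x (Multiset.mem_toFinset.mp hx)
      · intro C _ C' _ hCC
        apply Subtype.ext
        have := congrArg Subtype.val hCC
        simpa using this
      · intro B hB
        simp only [mem_filter, mem_univ, true_and] at hB
        have hle : S.1 ≤ B.1 := by
          refine (Multiset.le_iff_subset S.nodup).mpr ?_
          intro x hx
          have : x ∈ S := hx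
          rw [← hB] at this
          exact Multiset.mem_toFinset.mp this
        obtain ⟨u, hu⟩ := Multiset.le_iff_exists_add.mp hle
        have hucard : Multiset.card u = n - S.card := by
          have := congrArg Multiset.card hu
          simp [B.2] at this
          omega
        have hmem : ∀ x ∈ u, x ∈ S := by
          intro x hx
          have hxB : x ∈ B.1 := by rw [hu]; exact Multiset.mem_add.mpr (Or.inr hx)
          rw [← hB]
          exact Multiset.mem_toFinset.mpr hxB
        refine ⟨⟨u, hucard⟩, mem_filter.mpr ⟨mem_univ _, hmem⟩, ?_⟩
        apply Subtype.ext
        exact hu.symm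
    rw [← hb, key]
    congr 1
    omega
  · rw [Finset.card_eq_zero, Finset.filter_eq_empty_iff]
    intro B _
    intro hB
    rcases Nat.lt_or_ge S.card 1 with h0 | h1
    · have : S = ∅ := Finset.card_eq_zero.mp (by omega)
      subst this
      have hB0 : B.1 = 0 := Multiset.toFinset_eq_empty.mp hB
      have hB2 := B.2
      rw [hB0] at hB2
      simp at hB2
      omega
    · have : S.card ≤ n := by
        calc S.card = B.1.toFinset.card := by rw [hB]
        _ ≤ Multiset.card B.1 := Multiset.toFinset_card_le _
        _ = n := B.2
      exact absurd ⟨h1, this⟩ h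

section Neg

variable {p : ℕ}

/-- Negation mod `p` on `Fin p`. -/
def negp (hp : 0 < p) (s : Fin p) : Fin p := ⟨(p - s.1) % p, Nat.mod_lt _ hp⟩

lemma dvd_iff_negp (hp : 0 < p) (x s : Fin p) :
    p ∣ ((x : ℕ) + (s : ℕ)) ↔ x = negp hp s := by
  have hx := x.2
  have hs := s.2
  constructor
  · rintro ⟨c, hc⟩
    apply Fin.ext
    show x.1 = (p - s.1) % p
    match c with
    | 0 =>
      have hx0 : x.1 = 0 := by omega
      have hs0 : s.1 = 0 := by omega
      simp [hx0, hs0, Nat.mod_self]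
    | 1 =>
      have hxs : x.1 + s.1 = p := by omega
      have hspos : 0 < s.1 := by omega
      rw [Nat.mod_eq_of_lt (by omega)]
      omega
    | (c + 2) =>
      exfalso
      have : p * (c + 2) ≥ p * 2 := Nat.mul_le_mul_left p (by omega)
      omega
  · rintro rfl
    show p ∣ (p - s.1) % p + s.1
    rcases Nat.eq_zero_or_pos s.1 with h0 | hpos
    · simp [h0, Nat.mod_self]
    · rw [Nat.mod_eq_of_lt (by omega)]
      have : p - s.1 + s.1 = p := by omega
      rw [this]

lemma negp_involutive (hp : 0 < p) : Function.Involutive (negp hp) := by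
  intro s
  apply Fin.ext
  show (p - (p - s.1) % p) % p = s.1
  have hs := s.2
  rcases Nat.eq_zero_or_pos s.1 with h0 | hpos
  · simp [h0, Nat.mod_self]
  · have h1 : (p - s.1) % p = p - s.1 := Nat.mod_eq_of_lt (by omega)
    rw [h1]
    have h2 : p - (p - s.1) = s.1 := by omega
    rw [h2, Nat.mod_eq_of_lt hs]

lemma card_T (hp : 0 < p) (S : Finset (Fin p)) :
    (univ.filter fun x : Fin p => ∀ s ∈ S, ¬ (p ∣ ((x : ℕ) + (s : ℕ)))).card = p - S.card := by
  have heq : (univ.filter fun x : Fin p => ∀ s ∈ S, ¬ (p ∣ ((x : ℕ) + (s : ℕ))))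
      = univ \ S.image (negp hp) := by
    ext x
    simp only [mem_filter, mem_univ, true_and, mem_sdiff, mem_image]
    constructor
    · rintro h ⟨s, hs, rfl⟩
      exact h s hs ((dvd_iff_negp hp _ s).mpr rfl)
    · intro h s hs hdvd
      exact h ⟨s, hs, ((dvd_iff_negp hp x s).mp hdvd).symm⟩
  rw [heq, Finset.card_sdiff_of_subset (Finset.subset_univ _), Finset.card_univ, Fintype.card_fin,
    Finset.card_image_of_injective _ (negp_involutive hp).injective]

end Neg

theorem stmt_13 (p m n : ℕ) (hp : p.Prime) (hm : 1 ≤ m) (hn : 1 ≤ n) :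
    (Finset.univ.filter (fun ab : (Fin m → Fin p) × (Fin n → Fin p) =>
        (∀ i j : Fin m, i ≤ j → ab.1 i ≤ ab.1 j) ∧
        (∀ i j : Fin n, i ≤ j → ab.2 i ≤ ab.2 j) ∧
        ∀ (i : Fin m) (j : Fin n), ¬ p ∣ ((ab.1 i : ℕ) + (ab.2 j : ℕ)))).card =
      ∑ l ∈ Finset.Icc 1 (min n (p - 1)),
        Nat.choose p l * Nat.choose (n - 1) (n - l) * Nat.choose (m + p - l - 1) m := by
  have hppos : 0 < p := hp.pos
  have hp2 : 2 ≤ p := hp.two_le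
  obtain ⟨R, hR⟩ : ∃ R : Sym (Fin p) m → Sym (Fin p) n → Prop,
      R = fun A B => ∀ x : Fin p, x ∈ A → ∀ y : Fin p, y ∈ B → ¬ (p ∣ ((x : ℕ) + (y : ℕ))) :=
    ⟨_, rfl⟩
  -- Step 1 : move to Sym counting
  have step1 : (Finset.univ.filter (fun ab : (Fin m → Fin p) × (Fin n → Fin p) =>
        (∀ i j : Fin m, i ≤ j → ab.1 i ≤ ab.1 j) ∧
        (∀ i j : Fin n, i ≤ j → ab.2 i ≤ ab.2 j) ∧
        ∀ (i : Fin m) (j : Fin n), ¬ p ∣ ((ab.1 i : ℕ) + (ab.2 j : ℕ)))).card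
      = (univ.filter fun AB : Sym (Fin p) m × Sym (Fin p) n => R AB.1 AB.2).card := by
    have efilt : (Finset.univ.filter (fun ab : (Fin m → Fin p) × (Fin n → Fin p) =>
        (∀ i j : Fin m, i ≤ j → ab.1 i ≤ ab.1 j) ∧
        (∀ i j : Fin n, i ≤ j → ab.2 i ≤ ab.2 j) ∧
        ∀ (i : Fin m) (j : Fin n), ¬ p ∣ ((ab.1 i : ℕ) + (ab.2 j : ℕ))))
        = (Finset.univ.filter (fun fg : (Fin m → Fin p) × (Fin n → Fin p) =>
          Monotone fg.1 ∧ Monotone fg.2 ∧ R (toSym fg.1) (toSym fg.2))) := by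
      apply Finset.filter_congr
      intro ab _
      have e1 : (∀ i j : Fin m, i ≤ j → ab.1 i ≤ ab.1 j) ↔ Monotone ab.1 :=
        ⟨fun h a b hab => h a b hab, fun h a b hab => h hab⟩
      have e2 : (∀ i j : Fin n, i ≤ j → ab.2 i ≤ ab.2 j) ↔ Monotone ab.2 :=
        ⟨fun h a b hab => h a b hab, fun h a b hab => h hab⟩
      have e3 : (∀ (i : Fin m) (j : Fin n), ¬ p ∣ ((ab.1 i : ℕ) + (ab.2 j : ℕ)))
          ↔ R (toSym ab.1) (toSym ab.2) := by
        rw [hR]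
        constructor
        · intro h x hx y hy
          obtain ⟨i, rfl⟩ := mem_toSym.mp hx
          obtain ⟨j, rfl⟩ := mem_toSym.mp hy
          exact h i j
        · intro h i j
          exact h _ (mem_toSym.mpr ⟨i, rfl⟩) _ (mem_toSym.mpr ⟨j, rfl⟩)
      rw [e1, e2, e3]
    rw [efilt]
    exact card_filter_mono_pair R
  rw [step1]
  -- Step 2 : fiber over the support of the second component
  rw [Finset.card_eq_sum_card_fiberwise
    (f := fun AB : Sym (Fin p) m × Sym (Fin p) n => AB.2.1.toFinset)
    (t := (univ : Finset (Fin p)).powerset)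
    (fun x _ => Finset.mem_powerset.mpr (Finset.subset_univ _))]
  -- Step 3 : compute each fiber
  have step3 : ∀ S ∈ (univ : Finset (Fin p)).powerset,
      ((univ.filter fun AB : Sym (Fin p) m × Sym (Fin p) n => R AB.1 AB.2).filter
          (fun AB => AB.2.1.toFinset = S)).card
        = ((p - S.card + m - 1).choose m) *
            (if 1 ≤ S.card ∧ S.card ≤ n then (n - 1).choose (n - S.card) else 0) := by
    intro S _
    set T : Finset (Fin p) :=
      univ.filter fun x : Fin p => ∀ s ∈ S, ¬ (p ∣ ((x : ℕ) + (s : ℕ))) with hT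
    have hsplit : ((univ.filter fun AB : Sym (Fin p) m × Sym (Fin p) n => R AB.1 AB.2).filter
          (fun AB => AB.2.1.toFinset = S))
        = (univ.filter fun A : Sym (Fin p) m => ∀ x ∈ A, x ∈ T) ×ˢ
          (univ.filter fun B : Sym (Fin p) n => B.1.toFinset = S) := by
      ext AB
      simp only [Finset.mem_filter, Finset.mem_product, Finset.mem_univ, true_and]
      rw [hR]
      constructor
      · rintro ⟨h1, h2⟩
        refine ⟨fun x hx => ?_, h2⟩
        rw [hT, Finset.mem_filter]
        refine ⟨mem_univ _, fun s hs => ?_⟩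
        have hsB : s ∈ AB.2 := by
          have : s ∈ AB.2.1.toFinset := by rw [h2]; exact hs
          exact Multiset.mem_toFinset.mp this
        exact h1 x hx s hsB
      · rintro ⟨h1, h2⟩
        refine ⟨fun x hx y hy => ?_, h2⟩
        have hyS : y ∈ S := by
          rw [← h2]
          exact Multiset.mem_toFinset.mpr hy
        have := h1 x hx
        rw [hT, Finset.mem_filter] at this
        exact this.2 y hyS
    rw [hsplit, Finset.card_product, card_sym_filter_subset, card_sym_filter_toFinset_eq hn,
      card_T hppos]
  rw [Finset.sum_congr rfl step3]
  -- Step 4 : group by cardinality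
  rw [Finset.sum_powerset]
  have step4 : ∀ l ∈ Finset.range ((univ : Finset (Fin p)).card + 1),
      (∑ S ∈ Finset.powersetCard l (univ : Finset (Fin p)),
        ((p - S.card + m - 1).choose m) *
          (if 1 ≤ S.card ∧ S.card ≤ n then (n - 1).choose (n - S.card) else 0))
      = p.choose l * (((p - l + m - 1).choose m) *
          (if 1 ≤ l ∧ l ≤ n then (n - 1).choose (n - l) else 0)) := by
    intro l _
    rw [Finset.sum_powersetCard l (univ : Finset (Fin p))
      (fun j => ((p - j + m - 1).choose m) *
        (if 1 ≤ j ∧ j ≤ n then (n - 1).choose (n - j) else 0))]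
    rw [smul_eq_mul, Finset.card_univ, Fintype.card_fin]
  rw [Finset.sum_congr rfl step4]
  have hcardu : (univ : Finset (Fin p)).card = p := by
    rw [Finset.card_univ, Fintype.card_fin]
  rw [hcardu]
  -- Step 5 : final sum comparison
  have hzero : ∀ l ∈ Finset.range (p + 1), l ∉ Finset.Icc 1 (min n (p - 1)) →
      p.choose l * (((p - l + m - 1).choose m) *
        (if 1 ≤ l ∧ l ≤ n then (n - 1).choose (n - l) else 0)) = 0 := by
    intro l hl hnotin
    rw [Finset.mem_range] at hl
    rw [Finset.mem_Icc] at hnotin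
    push_neg at hnotin
    by_cases hc : 1 ≤ l ∧ l ≤ n
    · have hl1 : min n (p - 1) < l := hnotin hc.1
      have hlp : l = p := by omega
      rw [if_pos hc, hlp]
      have h0 : (p - p + m - 1).choose m = 0 := by
        apply Nat.choose_eq_zero_of_lt
        omega
      rw [h0]
      ring
    · rw [if_neg hc]
      ring
  have hsub : Finset.Icc 1 (min n (p - 1)) ⊆ Finset.range (p + 1) := by
    intro l hl
    rw [Finset.mem_Icc] at hl
    rw [Finset.mem_range]
    omega
  rw [← Finset.sum_subset hsub hzero]
  apply Finset.sum_congr rfl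
  intro l hl
  rw [Finset.mem_Icc] at hl
  have h1 : 1 ≤ l := hl.1
  have h2 : l ≤ n := le_trans hl.2 (min_le_left _ _)
  have h3 : l ≤ p - 1 := le_trans hl.2 (min_le_right _ _)
  rw [if_pos ⟨h1, h2⟩]
  have harith : p - l + m - 1 = m + p - l - 1 := by omega
  rw [harith]
  ring
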